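/- Case 1 of pattern fusion: let o and f be permutations of {1,...,m} with suffixorder(o) = prefixorder(f) and o_1 = f_m. Then there are exactly two permutations of {1,...,m+1} whose prefix OPP is o and whose suffix OPP is f: the pattern u with u_1 = o_1 and u_{m+1} = o_1 + 1, and the pattern v with v_1 = o_1 + 1 and v_{m+1} = o_1, where in both cases the middle entries are f_i if f_i < o_1 and f_i + 1 if f_i > o_1. -/

import Mathlib

/-- Rank of entry `j` among the entries of `q` (1-indexed rank). -/
def rankMap {α : Type*} [LinearOrder α] {m : ℕ} (q : Fin m → α) : Fin m → ℕ :=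
  fun j => (Finset.univ.filter fun i => q i ≤ q j).card

/-- `x` is an order-preserving pattern (a permutation of `{1,...,m}` written as a sequence). -/
def IsOPP {m : ℕ} (x : Fin m → ℕ) : Prop :=
  Function.Injective x ∧ ∀ j, 1 ≤ x j ∧ x j ≤ m

/-- The length-`ℓ` window of the (1-indexed) time series `k` ending at index `c`. -/
def window (k : ℕ → ℝ) (c ℓ : ℕ) : Fin ℓ → ℝ :=
  fun j => k (c - ℓ + 1 + (j : ℕ))

/-- `c` is an occurrence (end index) of pattern `p` in the time series `k` of length `n`. -/
def isOcc (k : ℕ → ℝ) (n : ℕ) {ℓ : ℕ} (p : Fin ℓ → ℕ) (c : ℕ) : Prop :=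
  ℓ ≤ c ∧ c ≤ n ∧ rankMap (window k c ℓ) = p

/-- Relative order of the first `m` entries of `x`. -/
def prefixorder {α : Type*} [LinearOrder α] {m : ℕ} (x : Fin (m+1) → α) : Fin m → ℕ :=
  rankMap (fun j : Fin m => x j.castSucc)

/-- Relative order of the last `m` entries of `x`. -/
def suffixorder {α : Type*} [LinearOrder α] {m : ℕ} (x : Fin (m+1) → α) : Fin m → ℕ :=
  rankMap (fun j : Fin m => x j.succ)

open Classical in
/-- The set of occurrences of `p` in `k`. -/
noncomputable def occSet (k : ℕ → ℝ) (n : ℕ) {ℓ : ℕ} (p : Fin ℓ → ℕ) : Finset ℕ :=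
  (Finset.Icc 1 n).filter fun c => isOcc k n p c

/-- The support of `p` in `k`. -/
noncomputable def supp (k : ℕ → ℝ) (n : ℕ) {ℓ : ℕ} (p : Fin ℓ → ℕ) : ℕ :=
  (occSet k n p).card

/-- For an OPP, the rank map is the pattern itself. -/
lemma opp_rank {m : ℕ} {x : Fin m → ℕ} (hx : IsOPP x) (j : Fin m) :
    rankMap x j = x j := by
  obtain ⟨hinj, hbd⟩ := hx
  have himg : Finset.image x Finset.univ = Finset.Icc 1 m := by
    apply Finset.eq_of_subset_of_card_le
    · intro v hv
      simp only [Finset.mem_image] at hv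
      obtain ⟨i, _, rfl⟩ := hv
      simpa [Finset.mem_Icc] using hbd i
    · rw [Finset.card_image_of_injective _ hinj]
      simp [Nat.card_Icc]
  have h1 : rankMap x j
      = ((Finset.univ.filter fun i => x i ≤ x j).image x).card := by
    rw [Finset.card_image_of_injective _ hinj]; rfl
  have h2 : (Finset.univ.filter fun i => x i ≤ x j).image x = Finset.Icc 1 (x j) := by
    ext v
    simp only [Finset.mem_image, Finset.mem_filter, Finset.mem_univ, true_and, Finset.mem_Icc]
    constructor
    · rintro ⟨i, hi, rfl⟩
      have := hbd i
      omega
    · intro hv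
      have hvm : v ∈ Finset.image x Finset.univ := by
        rw [himg]
        simp only [Finset.mem_Icc]
        have := hbd j
        omega
      simp only [Finset.mem_image, Finset.mem_univ, true_and] at hvm
      obtain ⟨i, rfl⟩ := hvm
      exact ⟨i, hv.2, rfl⟩
  rw [h1, h2, Nat.card_Icc]
  have := hbd j
  omega

lemma prefix_eq {m : ℕ} {w : Fin (m+1) → ℕ} (hw : IsOPP w) (j : Fin m) :
    w j.castSucc = prefixorder w j + (if w (Fin.last m) ≤ w j.castSucc then 1 else 0) := by
  have h := opp_rank hw j.castSucc
  unfold rankMap at h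
  rw [Finset.card_filter, Fin.sum_univ_castSucc, ← Finset.card_filter] at h
  unfold prefixorder rankMap
  beta_reduce
  omega

lemma suffix_eq {m : ℕ} {w : Fin (m+1) → ℕ} (hw : IsOPP w) (j : Fin m) :
    w j.succ = suffixorder w j + (if w 0 ≤ w j.succ then 1 else 0) := by
  have h := opp_rank hw j.succ
  unfold rankMap at h
  rw [Finset.card_filter, Fin.sum_univ_succ, ← Finset.card_filter] at h
  unfold suffixorder rankMap
  beta_reduce
  omega

lemma fin_cases3 {m : ℕ} {P : Fin (m+2) → Prop} (h0 : P 0) (hl : P (Fin.last (m+1)))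
    (hm : ∀ i : Fin m, P i.succ.castSucc) (j : Fin (m+2)) : P j := by
  induction j using Fin.cases with
  | zero => exact h0
  | succ i =>
    induction i using Fin.lastCases with
    | last => rw [Fin.succ_last]; exact hl
    | cast i' => rw [Fin.succ_castSucc]; exact hm i'

/-- Key consequence of the fusion hypotheses: the last `m` entries of `o`
equal the first `m` entries of `f`. -/
lemma key_fact {m : ℕ} {o f : Fin (m+1) → ℕ} (ho : IsOPP o) (hf : IsOPP f)
    (hof : suffixorder o = prefixorder f) (heq : o 0 = f (Fin.last m)) (j : Fin m) :
    o j.succ = f j.castSucc := by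
  have h1 := suffix_eq ho j
  have h2 := prefix_eq hf j
  rw [hof] at h1
  have hne1 : o j.succ ≠ o 0 := fun h => Fin.succ_ne_zero j (ho.1 h)
  have hne2 : f j.castSucc ≠ f (Fin.last m) := fun h => (Fin.castSucc_lt_last j).ne (hf.1 h)
  split_ifs at h1 h2 <;> omega

lemma back_dir {m : ℕ} {o f : Fin (m+1) → ℕ} (ho : IsOPP o) (hf : IsOPP f)
    (hof : suffixorder o = prefixorder f) (heq : o 0 = f (Fin.last m))
    {w : Fin (m+2) → ℕ}
    (hcase : (w 0 = o 0 ∧ w (Fin.last (m+1)) = o 0 + 1) ∨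
             (w 0 = o 0 + 1 ∧ w (Fin.last (m+1)) = o 0))
    (hmid : ∀ i : Fin m, w i.succ.castSucc =
        if f i.castSucc < o 0 then f i.castSucc else f i.castSucc + 1) :
    IsOPP w ∧ prefixorder w = o ∧ suffixorder w = f := by
  have hkey : ∀ j : Fin m, o j.succ = f j.castSucc := key_fact ho hf hof heq
  have hbo := ho.2
  have hbf := hf.2
  have hfo0 : ∀ i : Fin m, f i.castSucc ≠ o 0 := by
    intro i h
    exact (Fin.castSucc_lt_last i).ne (hf.1 (h.trans heq))
  have hwbd : ∀ j, 1 ≤ w j ∧ w j ≤ m + 2 := by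
    refine fin_cases3 ?_ ?_ ?_
    · have := hbo 0; rcases hcase with ⟨h1, h2⟩ | ⟨h1, h2⟩ <;> omega
    · have := hbo 0; rcases hcase with ⟨h1, h2⟩ | ⟨h1, h2⟩ <;> omega
    · intro i
      have h := hmid i
      have := hbf i.castSucc
      split_ifs at h <;> omega
  have hwinj : Function.Injective w := by
    have hg : ∀ i : Fin m, w i.succ.castSucc ≠ o 0 ∧ w i.succ.castSucc ≠ o 0 + 1 := by
      intro i
      have h := hmid i
      have := hfo0 i
      have := hbf i.castSucc
      constructor <;> (split_ifs at h <;> omega)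
    have hginj : ∀ i1 i2 : Fin m, w i1.succ.castSucc = w i2.succ.castSucc → i1 = i2 := by
      intro i1 i2 h
      have h1 := hmid i1
      have h2 := hmid i2
      have : f i1.castSucc = f i2.castSucc := by split_ifs at h1 h2 <;> omega
      exact Fin.castSucc_injective _ (hf.1 this)
    have hne0l : (0 : Fin (m+2)) ≠ Fin.last (m+1) := by simp [Fin.ext_iff]
    intro j1 j2
    refine fin_cases3 (P := fun j1 => w j1 = w j2 → j1 = j2) ?_ ?_ ?_ j1 <;>
      [skip; skip; intro i] <;>
      refine fin_cases3 (P := fun j2 => w _ = w j2 → _ = j2) ?_ ?_ ?_ j2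
    · intro _; rfl
    · intro h; exfalso; rcases hcase with ⟨h1, h2⟩ | ⟨h1, h2⟩ <;> omega
    · intro i h; exfalso
      have := hg i; rcases hcase with ⟨h1, h2⟩ | ⟨h1, h2⟩ <;> omega
    · intro h; exfalso; rcases hcase with ⟨h1, h2⟩ | ⟨h1, h2⟩ <;> omega
    · intro _; rfl
    · intro i h; exfalso
      have := hg i; rcases hcase with ⟨h1, h2⟩ | ⟨h1, h2⟩ <;> omega
    · intro h; exfalso
      have := hg i; rcases hcase with ⟨h1, h2⟩ | ⟨h1, h2⟩ <;> omega
    · intro h; exfalso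
      have := hg i; rcases hcase with ⟨h1, h2⟩ | ⟨h1, h2⟩ <;> omega
    · intro i2 h; rw [hginj i i2 h]
  have hw : IsOPP w := ⟨hwinj, hwbd⟩
  refine ⟨hw, ?_, ?_⟩
  · funext j
    induction j using Fin.cases with
    | zero =>
      have h := prefix_eq hw (0 : Fin (m+1))
      simp only [Fin.castSucc_zero] at h
      rcases hcase with ⟨h1, h2⟩ | ⟨h1, h2⟩ <;> by_cases hc : w (Fin.last (m+1)) ≤ w 0 <;> simp only [hc, ite_true, ite_false] at h <;> omega
    | succ i =>
      have h := prefix_eq hw i.succ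
      have hm := hmid i
      have hk := hkey i
      have := hbf i.castSucc
      have := hfo0 i
      rcases hcase with ⟨h1, h2⟩ | ⟨h1, h2⟩ <;> split_ifs at h hm <;> omega
  · funext j
    induction j using Fin.lastCases with
    | last =>
      have h := suffix_eq hw (Fin.last m)
      rw [Fin.succ_last] at h
      simp only [Nat.succ_eq_add_one] at h
      rcases hcase with ⟨h1, h2⟩ | ⟨h1, h2⟩ <;> split_ifs at h <;> omega
    | cast i =>
      have h := suffix_eq hw i.castSucc
      rw [Fin.succ_castSucc] at h
      have hm := hmid i
      have := hbf i.castSucc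
      have := hfo0 i
      rcases hcase with ⟨h1, h2⟩ | ⟨h1, h2⟩ <;> split_ifs at h hm <;> omega

theorem stmt12 {m : ℕ} (o f : Fin (m+1) → ℕ) (ho : IsOPP o) (hf : IsOPP f)
    (hof : suffixorder o = prefixorder f) (heq : o 0 = f (Fin.last m)) :
    ∀ w : Fin (m+2) → ℕ,
      (IsOPP w ∧ prefixorder w = o ∧ suffixorder w = f) ↔
      ((w 0 = o 0 ∧ w (Fin.last (m+1)) = o 0 + 1 ∧
          ∀ i : Fin m, w i.succ.castSucc =
            if f i.castSucc < o 0 then f i.castSucc else f i.castSucc + 1) ∨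
       (w 0 = o 0 + 1 ∧ w (Fin.last (m+1)) = o 0 ∧
          ∀ i : Fin m, w i.succ.castSucc =
            if f i.castSucc < o 0 then f i.castSucc else f i.castSucc + 1)) := by
  intro w
  constructor
  · rintro ⟨hw, hpre, hsuf⟩
    have ha : w (Fin.castSucc 0) = prefixorder w 0 +
        (if w (Fin.last (m+1)) ≤ w (Fin.castSucc 0) then 1 else 0) := prefix_eq hw 0
    rw [hpre] at ha
    simp only [Fin.castSucc_zero] at ha
    have hb := suffix_eq hw (Fin.last m)
    rw [hsuf, Fin.succ_last] at hb
    simp only [Nat.succ_eq_add_one] at hb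
    have hab : w 0 ≠ w (Fin.last (m+1)) := by
      intro h
      exact (by simp [Fin.ext_iff] : (0 : Fin (m+2)) ≠ Fin.last (m+1)) (hw.1 h)
    have hcase : (w 0 = o 0 ∧ w (Fin.last (m+1)) = o 0 + 1) ∨
        (w 0 = o 0 + 1 ∧ w (Fin.last (m+1)) = o 0) := by
      by_cases hc1 : w (Fin.last (m+1)) ≤ w 0 <;> by_cases hc2 : w 0 ≤ w (Fin.last (m+1)) <;>
        simp only [hc1, hc2, ite_true, ite_false] at ha hb <;> omega
    have hfo0 : ∀ i : Fin m, f i.castSucc ≠ o 0 := by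
      intro i h
      exact (Fin.castSucc_lt_last i).ne (hf.1 (h.trans heq))
    have hmid : ∀ i : Fin m, w i.succ.castSucc =
        if f i.castSucc < o 0 then f i.castSucc else f i.castSucc + 1 := by
      intro i
      have h := suffix_eq hw i.castSucc
      rw [hsuf, Fin.succ_castSucc] at h
      have hne1 : w i.succ.castSucc ≠ w 0 := by
        intro hh
        exact (by simp [Fin.ext_iff] : i.succ.castSucc ≠ (0 : Fin (m+2))) (hw.1 hh)
      have hne2 : w i.succ.castSucc ≠ w (Fin.last (m+1)) := by
        intro hh
        exact (by simp [Fin.ext_iff]; omega : i.succ.castSucc ≠ Fin.last (m+1)) (hw.1 hh)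
      have := hfo0 i
      have := hf.2 i.castSucc
      rcases hcase with ⟨h1, h2⟩ | ⟨h1, h2⟩ <;> split_ifs at h ⊢ <;> omega
    rcases hcase with ⟨h1, h2⟩ | ⟨h1, h2⟩
    · exact Or.inl ⟨h1, h2, hmid⟩
    · exact Or.inr ⟨h1, h2, hmid⟩
  · rintro (⟨h1, h2, h3⟩ | ⟨h1, h2, h3⟩)
    · exact back_dir ho hf hof heq (Or.inl ⟨h1, h2⟩) h3
    · exact back_dir ho hf hof heq (Or.inr ⟨h1, h2⟩) h3
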